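/- Let F be a proper subfield of a field K of characteristic 0. Let p(x) = Σ_{k=0}^n a_k x^k ∈ K[x] be nonconstant with 0 ≠ a_n ∈ F. Let q ∈ K[x,y] be a nonzero polynomial in two variables with some coefficient not in F, written q(x,y) = Σ_{j=0}^m q_j(x,y) with each q_j homogeneous of degree j and q_m ≠ 0, where all coefficients of q_m lie in F. If q_j has some coefficient not in F for some j ≥ 1, then the composition p(q(x,y)) has some coefficient not in F, and D_F(p(q(x,y))) = D_F(q). -/

import Mathlib

open Polynomial

/-- The `F`-deficit of a polynomial `p` in one variable. -/
noncomputable def deficit {K : Type*} [Field K] (F : Subfield K) (p : K[X]) : ℕ :=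
  p.natDegree - sSup {k : ℕ | p.coeff k ∉ F}

/-- The `F`-deficit of a polynomial `q` in two variables: the total degree of `q`
minus the largest `k` such that the degree-`k` homogeneous component of `q` has
some coefficient not in `F`.  When all coefficients of `q` lie in `F`, the set
below is empty, `sSup ∅ = 0`, and the deficit equals the total degree. -/
noncomputable def deficit2 {K : Type*} [Field K] (F : Subfield K)
    (q : MvPolynomial (Fin 2) K) : ℕ :=
  q.totalDegree -
    sSup {k : ℕ | ∃ d, MvPolynomial.coeff d (MvPolynomial.homogeneousComponent k q) ∉ F}

section Helpers
open MvPolynomial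


private lemma Fp_mul {K : Type*} [Field K] (F : Subfield K) {a b : MvPolynomial (Fin 2) K}
    (ha : ∀ d, coeff d a ∈ F) (hb : ∀ d, coeff d b ∈ F) : ∀ d, coeff d (a * b) ∈ F := by
  intro d
  rw [MvPolynomial.coeff_mul]
  exact sum_mem (fun x _ => mul_mem (ha x.1) (hb x.2))

private lemma Fp_pow {K : Type*} [Field K] (F : Subfield K) {a : MvPolynomial (Fin 2) K}
    (ha : ∀ d, coeff d a ∈ F) (j : ℕ) : ∀ d, coeff d (a ^ j) ∈ F := by
  induction j with
  | zero =>
      intro d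
      rw [pow_zero, ← MvPolynomial.C_1, MvPolynomial.coeff_C]
      split
      · exact one_mem F
      · exact zero_mem F
  | succ k ih => rw [pow_succ]; exact Fp_mul F ih ha

private lemma Fp_hc {K : Type*} [Field K] (F : Subfield K) {a : MvPolynomial (Fin 2) K}
    (ha : ∀ d, coeff d a ∈ F) (k : ℕ) : ∀ d, coeff d (homogeneousComponent k a) ∈ F := by
  intro d
  rw [coeff_homogeneousComponent]
  split
  · exact ha d
  · exact zero_mem F

private lemma pow_expand1 {K : Type*} [Field K] (u v : MvPolynomial (Fin 2) K) (j : ℕ) :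
    (u + v) ^ j = (∑ i ∈ Finset.range j, u ^ i * v ^ (j - i) * (j.choose i : MvPolynomial (Fin 2) K))
      + u ^ j := by
  rw [add_pow, Finset.sum_range_succ, Nat.sub_self, Nat.choose_self, pow_zero, Nat.cast_one,
    mul_one, mul_one]

private lemma pow_expand2 {K : Type*} [Field K] (u v : MvPolynomial (Fin 2) K) (j : ℕ) :
    (u + v) ^ (j + 1) = u ^ (j + 1) + (((j + 1 : ℕ)) : MvPolynomial (Fin 2) K) * (u ^ j * v)
      + ∑ i ∈ Finset.range j, u ^ i * v ^ (j + 1 - i) * ((j+1).choose i : MvPolynomial (Fin 2) K) := by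
  rw [add_pow, Finset.sum_range_succ, Finset.sum_range_succ]
  have h1 : (j + 1) - j = 1 := by omega
  rw [h1, Nat.choose_succ_self_right, Nat.choose_self, Nat.sub_self]
  push_cast
  ring

private lemma deg_term_le {K : Type*} [Field K] (u v : MvPolynomial (Fin 2) K) {a b : ℕ}
    (hu : u.totalDegree ≤ a) (hv : v.totalDegree ≤ b) (i e c : ℕ) :
    (u ^ i * v ^ e * (c : MvPolynomial (Fin 2) K)).totalDegree ≤ i * a + e * b := by
  calc (u ^ i * v ^ e * (c : MvPolynomial (Fin 2) K)).totalDegree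
      ≤ (u ^ i * v ^ e).totalDegree + (c : MvPolynomial (Fin 2) K).totalDegree :=
        totalDegree_mul _ _
    _ ≤ (u ^ i).totalDegree + (v ^ e).totalDegree + 0 := by
        rw [show ((c:ℕ) : MvPolynomial (Fin 2) K) = MvPolynomial.C ((c:ℕ):K) from (map_natCast (MvPolynomial.C : K →+* MvPolynomial (Fin 2) K) c).symm, totalDegree_C]
        exact Nat.add_le_add (totalDegree_mul _ _) le_rfl
    _ ≤ i * u.totalDegree + e * v.totalDegree + 0 :=
        Nat.add_le_add (Nat.add_le_add (totalDegree_pow _ _) (totalDegree_pow _ _)) le_rfl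
    _ ≤ i * a + e * b := by
        simpa using Nat.add_le_add (Nat.mul_le_mul_left i hu) (Nat.mul_le_mul_left e hv)



private lemma keyA {K : Type*} [Field K] (F : Subfield K)
    (g h : MvPolynomial (Fin 2) K) (hg : g ≠ 0) (hgF : ∀ d, coeff d g ∈ F)
    (hh : ∃ c, coeff c h ∉ F) : ∃ d, coeff d (g * h) ∉ F := by
  obtain ⟨c, hc⟩ := hh
  by_contra hall
  push_neg at hall
  set S : Submodule F K := Submodule.span F {(1:K)} with hS
  have hmemS : ∀ x : K, x ∈ S ↔ x ∈ F := by
    intro x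
    rw [Submodule.mem_span_singleton]
    constructor
    · rintro ⟨a, rfl⟩
      simpa [Subfield.smul_def, smul_eq_mul] using a.2
    · intro hx
      exact ⟨⟨x, hx⟩, by simp [Subfield.smul_def, smul_eq_mul]⟩
  obtain ⟨S', hcompl⟩ := Submodule.exists_isCompl S
  set φ : K →ₗ[F] K := S'.subtype.comp (Submodule.projectionOnto S' S hcompl.symm) with hφ
  have hker : ∀ x : K, x ∈ F → φ x = 0 := by
    intro x hx
    simp only [hφ, LinearMap.comp_apply,
      Submodule.projectionOnto_apply_of_mem_right hcompl.symm ((hmemS x).2 hx)]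
    simp
  have hker' : ∀ x : K, φ x = 0 → x ∈ F := by
    intro x hx
    have : Submodule.projectionOnto S' S hcompl.symm x = 0 := by
      have := hx
      simp only [hφ, LinearMap.comp_apply] at this
      exact_mod_cast Subtype.ext (by simpa using this)
    exact (hmemS x).1 ((Submodule.projectionOnto_apply_eq_zero_iff hcompl.symm).1 this)
  have hmul : ∀ (a : K), a ∈ F → ∀ y : K, φ (a * y) = a * φ y := by
    intro a ha y
    have : φ ((⟨a, ha⟩ : F) • y) = (⟨a, ha⟩ : F) • φ y := map_smul φ _ _
    simpa [Subfield.smul_def, smul_eq_mul] using this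
  set h' : MvPolynomial (Fin 2) K := ∑ d ∈ h.support, monomial d (φ (coeff d h)) with hh'
  have hcoeff : ∀ e, coeff e h' = φ (coeff e h) := by
    intro e
    rw [hh', MvPolynomial.coeff_sum]
    simp only [MvPolynomial.coeff_monomial]
    by_cases he : e ∈ h.support
    · rw [Finset.sum_ite_eq' h.support e (fun d => φ (coeff d h))] -- careful form
      simp [he]
    · rw [Finset.sum_ite_eq' h.support e (fun d => φ (coeff d h))]
      simp [he, MvPolynomial.notMem_support_iff.1 he]
  have hzero : g * h' = 0 := by
    apply MvPolynomial.ext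
    intro e
    rw [MvPolynomial.coeff_mul, MvPolynomial.coeff_zero]
    have : ∀ x ∈ Finset.HasAntidiagonal.antidiagonal e, coeff x.1 g * coeff x.2 h'
        = φ (coeff x.1 g * coeff x.2 h) := by
      intro x _
      rw [hcoeff, hmul _ (hgF x.1)]
    rw [Finset.sum_congr rfl this, ← map_sum, ← MvPolynomial.coeff_mul]
    exact hker _ (hall e)
  rcases mul_eq_zero.1 hzero with h1 | h1
  · exact hg h1
  · apply hc
    apply hker'
    rw [← hcoeff, h1, MvPolynomial.coeff_zero]


theorem stmt10 {K : Type*} [Field K] [CharZero K] (F : Subfield K) (hF : F ≠ ⊤)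
    (p : K[X]) (hp : 0 < p.natDegree) (hpl : p.leadingCoeff ∈ F)
    (q : MvPolynomial (Fin 2) K) (hq : q ≠ 0)
    (hqF : ∃ d, MvPolynomial.coeff d q ∉ F)
    (hqm : ∀ d, MvPolynomial.coeff d
      (MvPolynomial.homogeneousComponent q.totalDegree q) ∈ F)
    (hj : ∃ j, 1 ≤ j ∧
      ∃ d, MvPolynomial.coeff d (MvPolynomial.homogeneousComponent j q) ∉ F) :
    (∃ d, MvPolynomial.coeff d (Polynomial.aeval q p) ∉ F) ∧
      deficit2 F (Polynomial.aeval q p) = deficit2 F q := by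
  classical
  set P : MvPolynomial (Fin 2) K := Polynomial.aeval q p with hPdef
  set n := p.natDegree with hn
  set m := q.totalDegree with hm
  set an := p.leadingCoeff with han
  have hp0 : p ≠ 0 := fun h => by simp [h, hn] at hp
  have han0 : an ≠ 0 := by rw [han]; exact Polynomial.leadingCoeff_ne_zero.2 hp0
  have hn1 : 1 ≤ n := hp
  set Sq := {k : ℕ | ∃ d, MvPolynomial.coeff d (homogeneousComponent k q) ∉ F} with hSq
  have hSub : ∀ k ∈ Sq, k ≤ m := by
    intro k hk
    by_contra hkm
    obtain ⟨d, hd⟩ := hk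
    rw [homogeneousComponent_eq_zero k q (by omega : q.totalDegree < k)] at hd
    exact hd (by simpa using zero_mem F)
  have hbdd : BddAbove Sq := ⟨m, hSub⟩
  obtain ⟨j, hj1, hjmem⟩ := hj
  have hne : Sq.Nonempty := ⟨j, hjmem⟩
  set t := sSup Sq with ht
  have htmem : t ∈ Sq := Nat.sSup_mem hne hbdd
  have htm : t ≤ m := hSub t htmem
  have h1t : 1 ≤ t := le_trans hj1 (le_csSup hbdd hjmem)
  have h1m : 1 ≤ m := le_trans h1t htm
  have htlt : t < m := by
    rcases lt_or_eq_of_le htm with h | h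
    · exact h
    · exfalso
      obtain ⟨d, hd⟩ := htmem
      rw [h] at hd
      exact hd (hqm d)
  have hFabove : ∀ k, t < k → ∀ d, MvPolynomial.coeff d (homogeneousComponent k q) ∈ F := by
    intro k hk d
    by_contra hd
    exact absurd (le_csSup hbdd ⟨d, hd⟩) (not_le.2 hk)
  obtain ⟨ct, hct⟩ := htmem
  -- homogeneous pieces
  set qm := homogeneousComponent m q with hqmdef
  set qt := homogeneousComponent t q with hqtdef
  set A := ∑ k ∈ Finset.Ico (t+1) (m+1), homogeneousComponent k q with hA
  set A' := ∑ k ∈ Finset.Ico (t+1) m, homogeneousComponent k q with hA'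
  set B := ∑ k ∈ Finset.range (t+1), homogeneousComponent k q with hB
  have hABq : A + B = q := by
    rw [hA, hB, Finset.range_eq_Ico, add_comm]
    rw [Finset.sum_Ico_consecutive _ (by omega : 0 ≤ t+1) (by omega : t+1 ≤ m+1)]
    rw [← Finset.range_eq_Ico, hm]
    exact sum_homogeneousComponent q
  have hAA' : A = A' + qm := by
    rw [hA, hA', Finset.sum_Ico_succ_top (by omega : t+1 ≤ m)]
  have hcomm : qm + A' = A := by rw [hAA', add_comm]
  -- coefficients in F
  have FpA : ∀ d, MvPolynomial.coeff d A ∈ F := by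
    intro d
    rw [hA, MvPolynomial.coeff_sum]
    exact sum_mem fun k hk => hFabove k (by have := Finset.mem_Ico.1 hk; omega) d
  have FpA' : ∀ d, MvPolynomial.coeff d A' ∈ F := by
    intro d
    rw [hA', MvPolynomial.coeff_sum]
    exact sum_mem fun k hk => hFabove k (by have := Finset.mem_Ico.1 hk; omega) d
  have Fpqm : ∀ d, MvPolynomial.coeff d qm ∈ F := hqm
  -- degrees
  have hdeghc : ∀ k, (homogeneousComponent k q).totalDegree ≤ k :=
    fun k => IsHomogeneous.totalDegree_le (homogeneousComponent_isHomogeneous k q)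
  have hdegB : B.totalDegree ≤ t := by
    refine le_trans (totalDegree_finset_sum _ _) (Finset.sup_le fun i hi => le_trans (hdeghc i) ?_)
    have := Finset.mem_range.1 hi; omega
  have hdegA : A.totalDegree ≤ m := by
    refine le_trans (totalDegree_finset_sum _ _) (Finset.sup_le fun i hi => le_trans (hdeghc i) ?_)
    have := Finset.mem_Ico.1 hi; omega
  have hdegA' : A'.totalDegree ≤ m - 1 := by
    refine le_trans (totalDegree_finset_sum _ _) (Finset.sup_le fun i hi => le_trans (hdeghc i) ?_)
    have := Finset.mem_Ico.1 hi; omega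
  have hdegqm : qm.totalDegree ≤ m := hdeghc m
  have hqm0 : qm ≠ 0 := by
    intro h0
    have hABq' : q = A' + B := by rw [← hABq, hAA', h0, add_zero]
    have : q.totalDegree ≤ m - 1 := by
      rw [hABq']
      exact le_trans (totalDegree_add _ _) (max_le hdegA' (le_trans hdegB (by omega)))
    rw [← hm] at this
    omega
  set s0 := (n-1)*m + t with hs0
  have hs0pos : 0 < s0 := Nat.lt_of_lt_of_le h1t (Nat.le_add_left _ _)
  have hnsucc : n - 1 + 1 = n := by omega
  have hmm : n * m = (n-1)*m + m := by conv_lhs => rw [← hnsucc, add_one_mul]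
  have hs0lt : s0 < n*m := by rw [hs0, hmm]; exact Nat.add_lt_add_left htlt _
  have hdegqk : ∀ k, (q^k).totalDegree ≤ k * m := fun k => by
    simpa [← hm] using totalDegree_pow q k
  have hPsum : P = ∑ k ∈ Finset.range (n+1), p.coeff k • q ^ k := by
    rw [hPdef, hn]
    exact Polynomial.aeval_eq_sum_range q
  have hcoeffn : p.coeff n = an := by rw [han, hn]; rfl
  -- reduction to top coefficient
  have hPtop : ∀ s, s0 ≤ s → homogeneousComponent s P = an • homogeneousComponent s (q^n) := by
    intro s hs
    rw [hPsum, map_sum, Finset.sum_range_succ]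
    have hz : ∀ k ∈ Finset.range n, homogeneousComponent s (p.coeff k • q^k) = 0 := by
      intro k hk
      rw [map_smul, homogeneousComponent_eq_zero, smul_zero]
      have hk' := Finset.mem_range.1 hk
      calc (q^k).totalDegree ≤ k*m := hdegqk k
        _ ≤ (n-1)*m := Nat.mul_le_mul_right m (by omega)
        _ < s := by
            have : (n-1)*m < s0 := by rw [hs0]; omega
            omega
    rw [Finset.sum_eq_zero hz, zero_add, map_smul, hcoeffn]
  -- binomial expansion of q^n
  have hqnE := pow_expand2 A B (n-1)
  rw [hnsucc, hABq] at hqnE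
  set T1 := ∑ i ∈ Finset.range (n-1), A^i * B^(n-i) * ((n).choose i : MvPolynomial (Fin 2) K)
    with hT1
  have hAexp := pow_expand1 qm A' (n-1)
  rw [hcomm] at hAexp
  set T2 := ∑ i ∈ Finset.range (n-1), qm^i * A'^(n-1-i)
      * (((n-1)).choose i : MvPolynomial (Fin 2) K) with hT2
  have hqnE2 : q^n = A^n + (n : MvPolynomial (Fin 2) K)*(qm^(n-1)*B)
      + ((n : MvPolynomial (Fin 2) K)*(T2*B) + T1) := by
    rw [hqnE, hAexp]; ring
  -- degree bounds for junk
  have hdegT1 : T1.totalDegree < s0 := by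
    rw [hT1]
    refine lt_of_le_of_lt (totalDegree_finset_sum _ _)
      ((Finset.sup_lt_iff (show (⊥:ℕ) < s0 from hs0pos)).2 fun i hi => ?_)
    have hi' := Finset.mem_range.1 hi
    refine lt_of_le_of_lt (deg_term_le A B hdegA hdegB i (n - i) _) ?_
    obtain ⟨c, hc1, hc2⟩ : ∃ c, n - i = c + 1 ∧ n - 1 = i + c := ⟨n - 1 - i, by omega, by omega⟩
    rw [hc1, hs0, hc2]
    have hc0 : 1 ≤ c := by omega
    have hmul : c * (t+1) ≤ c * m := Nat.mul_le_mul_left c htlt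
    have h2 : c*t < c*m := by
      calc c*t < c*t + c := Nat.lt_add_of_pos_right (by omega)
        _ = c*(t+1) := (Nat.mul_succ c t).symm
        _ ≤ c*m := hmul
    calc i*m + (c+1)*t = (i*m + c*t) + t := by rw [add_one_mul]; ring
      _ < (i*m + c*m) + t := Nat.add_lt_add_right (Nat.add_lt_add_left h2 _) t
      _ = (i+c)*m + t := by rw [Nat.add_mul]
  have hjunk : ∀ s, s0 ≤ s →
      homogeneousComponent s ((n : MvPolynomial (Fin 2) K)*(T2*B) + T1) = 0 := by
    intro s hs
    by_cases hn2 : n = 1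
    · have hT10 : T1 = 0 := by rw [hT1, hn2]; simp
      have hT20 : T2 = 0 := by rw [hT2, hn2]; simp
      rw [hT10, hT20]
      simp
    · -- n ≥ 2
      have hdegT2 : T2.totalDegree < (n-1)*m := by
        rw [hT2]
        refine lt_of_le_of_lt (totalDegree_finset_sum _ _)
          ((Finset.sup_lt_iff (show (⊥:ℕ) < (n-1)*m from
            Nat.mul_pos (by omega) (by omega))).2 fun i hi => ?_)
        have hi' := Finset.mem_range.1 hi
        refine lt_of_le_of_lt (deg_term_le qm A' hdegqm hdegA' i (n-1-i) _) ?_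
        obtain ⟨c, hc1, hc2⟩ : ∃ c, n - 1 - i = c ∧ n - 1 = i + c := ⟨n-1-i, rfl, by omega⟩
        rw [hc1, hc2]
        have hc0 : 1 ≤ c := by omega
        have hmul : c * ((m-1)+1) ≤ c * m := Nat.mul_le_mul_left c (by omega)
        calc i*m + c*(m-1) < i*m + (c*(m-1) + c) :=
              Nat.add_lt_add_left (Nat.lt_add_of_pos_right (by omega)) _
          _ = i*m + c*((m-1)+1) := by rw [Nat.mul_succ]
          _ ≤ i*m + c*m := Nat.add_le_add_left hmul _
          _ = (i+c)*m := by rw [Nat.add_mul]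
      have hd1 : ((n : MvPolynomial (Fin 2) K)*(T2*B)).totalDegree < s0 := by
        refine lt_of_le_of_lt (totalDegree_mul _ _) ?_
        have hcast : ((n:ℕ) : MvPolynomial (Fin 2) K).totalDegree = 0 := by
          rw [show ((n:ℕ) : MvPolynomial (Fin 2) K) = MvPolynomial.C ((n:ℕ):K) from
            (map_natCast (MvPolynomial.C : K →+* MvPolynomial (Fin 2) K) n).symm, totalDegree_C]
        rw [hcast, zero_add]
        refine lt_of_le_of_lt (totalDegree_mul _ _) ?_
        rw [hs0]
        exact add_lt_add_of_lt_of_le hdegT2 hdegB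
      have : ((n : MvPolynomial (Fin 2) K)*(T2*B) + T1).totalDegree < s0 :=
        lt_of_le_of_lt (totalDegree_add _ _) (max_lt hd1 hdegT1)
      exact homogeneousComponent_eq_zero s _ (by omega)
  have hqm_top : ∀ s, s0 ≤ s → homogeneousComponent s (q^n)
      = homogeneousComponent s (A^n)
        + homogeneousComponent s ((n : MvPolynomial (Fin 2) K)*(qm^(n-1)*B)) := by
    intro s hs
    rw [hqnE2, map_add, map_add, hjunk s hs, add_zero]
  have hdegX : ((n : MvPolynomial (Fin 2) K)*(qm^(n-1)*B)).totalDegree ≤ s0 := by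
    refine le_trans (totalDegree_mul _ _) ?_
    have hcast : ((n:ℕ) : MvPolynomial (Fin 2) K).totalDegree = 0 := by
      rw [show ((n:ℕ) : MvPolynomial (Fin 2) K) = MvPolynomial.C ((n:ℕ):K) from
        (map_natCast (MvPolynomial.C : K →+* MvPolynomial (Fin 2) K) n).symm, totalDegree_C]
    rw [hcast, zero_add]
    refine le_trans (totalDegree_mul _ _) ?_
    rw [hs0]
    exact Nat.add_le_add (le_trans (totalDegree_pow _ _) (Nat.mul_le_mul_left _ hdegqm)) hdegB
  have hhcX : ∀ s, s0 < s → homogeneousComponent s ((n : MvPolynomial (Fin 2) K)*(qm^(n-1)*B)) = 0 := by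
    intro s hs
    exact homogeneousComponent_eq_zero s _ (by omega)
  -- the crucial component at s0
  have hGhom : ((n : MvPolynomial (Fin 2) K)*qm^(n-1)).IsHomogeneous ((n-1)*m) := by
    have h1 : ((n : ℕ) : MvPolynomial (Fin 2) K).IsHomogeneous 0 := by
      rw [show ((n:ℕ) : MvPolynomial (Fin 2) K) = MvPolynomial.C ((n:ℕ):K) from
        (map_natCast (MvPolynomial.C : K →+* MvPolynomial (Fin 2) K) n).symm]
      exact isHomogeneous_C _ _
    have h2 : (qm^(n-1)).IsHomogeneous (m*(n-1)) :=
      (homogeneousComponent_isHomogeneous m q).pow (n-1)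
    have h3 := h1.mul h2
    have : (0 + m*(n-1)) = (n-1)*m := by ring
    rwa [this] at h3
  have hhcX0 : homogeneousComponent s0 ((n : MvPolynomial (Fin 2) K)*(qm^(n-1)*B))
      = ((n : MvPolynomial (Fin 2) K)*qm^(n-1)) * qt := by
    have hXsum : (n : MvPolynomial (Fin 2) K)*(qm^(n-1)*B)
        = ∑ i ∈ Finset.range (t+1),
            ((n : MvPolynomial (Fin 2) K)*qm^(n-1)) * homogeneousComponent i q := by
      rw [hB, Finset.mul_sum, Finset.mul_sum]
      exact Finset.sum_congr rfl fun i _ => (mul_assoc _ _ _).symm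
    rw [hXsum, map_sum]
    have hterm : ∀ i ∈ Finset.range (t+1),
        homogeneousComponent s0 (((n : MvPolynomial (Fin 2) K)*qm^(n-1)) * homogeneousComponent i q)
        = if t = i then ((n : MvPolynomial (Fin 2) K)*qm^(n-1)) * homogeneousComponent i q else 0 := by
      intro i hi
      rw [homogeneousComponent_of_mem ((mem_homogeneousSubmodule _ _).2
        (hGhom.mul (homogeneousComponent_isHomogeneous i q)))]
      by_cases hti : t = i
      · rw [if_pos (by rw [hs0, hti]), if_pos hti]
      · rw [if_neg (fun hcon => hti (by rw [hs0] at hcon; omega)), if_neg hti]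
    rw [Finset.sum_congr rfl hterm, Finset.sum_ite_eq (Finset.range (t+1)) t]
    rw [if_pos (Finset.mem_range.2 (by omega))]
  -- the bad coefficient
  have hg0 : (MvPolynomial.C (an * (n:K)) * qm^(n-1) : MvPolynomial (Fin 2) K) ≠ 0 := by
    apply mul_ne_zero
    · rw [Ne, MvPolynomial.C_eq_zero]
      exact mul_ne_zero han0 (Nat.cast_ne_zero.2 (by omega))
    · exact pow_ne_zero _ hqm0
  have hgF : ∀ d, MvPolynomial.coeff d (MvPolynomial.C (an * (n:K)) * qm^(n-1)) ∈ F := by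
    refine Fp_mul F (fun d => ?_) (Fp_pow F Fpqm (n-1))
    rw [MvPolynomial.coeff_C]
    split
    · exact mul_mem hpl (by exact_mod_cast natCast_mem F n)
    · exact zero_mem F
  obtain ⟨dbad, hdbad⟩ := keyA F _ qt hg0 hgF ⟨ct, hct⟩
  have hstep : homogeneousComponent s0 P
      = an • homogeneousComponent s0 (A^n) + (MvPolynomial.C (an * (n:K)) * qm^(n-1)) * qt := by
    rw [hPtop s0 le_rfl, hqm_top s0 le_rfl, hhcX0, smul_add]
    congr 1
    rw [MvPolynomial.smul_eq_C_mul, show ((n:ℕ) : MvPolynomial (Fin 2) K) = MvPolynomial.C ((n:ℕ):K) from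
      (map_natCast (MvPolynomial.C : K →+* MvPolynomial (Fin 2) K) n).symm, map_mul]
    ring
  have hFAn : ∀ s d, MvPolynomial.coeff d (an • homogeneousComponent s (A^n)) ∈ F := by
    intro s d
    rw [MvPolynomial.coeff_smul, smul_eq_mul]
    exact mul_mem hpl (Fp_hc F (Fp_pow F FpA n) s d)
  have hnot : MvPolynomial.coeff dbad (homogeneousComponent s0 P) ∉ F := by
    rw [hstep, MvPolynomial.coeff_add]
    intro hmem
    apply hdbad
    have := sub_mem hmem (hFAn s0 dbad)
    simpa using this
  have hfirst : ∃ d, MvPolynomial.coeff d P ∉ F := by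
    refine ⟨dbad, fun hmem => hnot ?_⟩
    rw [coeff_homogeneousComponent]
    split
    · exact hmem
    · exact zero_mem F
  -- coefficients above s0 lie in F
  have hSPhigh : ∀ s, s0 < s → ∀ d, MvPolynomial.coeff d (homogeneousComponent s P) ∈ F := by
    intro s hs d
    rw [hPtop s (le_of_lt hs), hqm_top s (le_of_lt hs), hhcX s hs, add_zero]
    exact hFAn s d
  -- total degree of P
  have hAntop : homogeneousComponent (n*m) (A^n) = qm^n := by
    have hAexp2 := pow_expand1 qm A' n
    rw [hcomm] at hAexp2
    set T3 := ∑ i ∈ Finset.range n, qm^i * A'^(n-i) * ((n).choose i : MvPolynomial (Fin 2) K)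
      with hT3
    have hdegT3 : T3.totalDegree < n*m := by
      rw [hT3]
      refine lt_of_le_of_lt (totalDegree_finset_sum _ _)
        ((Finset.sup_lt_iff (show (⊥:ℕ) < n*m from
          Nat.mul_pos (by omega) (by omega))).2 fun i hi => ?_)
      have hi' := Finset.mem_range.1 hi
      refine lt_of_le_of_lt (deg_term_le qm A' hdegqm hdegA' i (n-i) _) ?_
      obtain ⟨c, hc1, hc2⟩ : ∃ c, n - i = c ∧ n = i + c := ⟨n-i, rfl, by omega⟩
      rw [hc1, hc2]
      have hc0 : 1 ≤ c := by omega
      have hmul : c * ((m-1)+1) ≤ c * m := Nat.mul_le_mul_left c (by omega)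
      calc i*m + c*(m-1) < i*m + (c*(m-1) + c) :=
            Nat.add_lt_add_left (Nat.lt_add_of_pos_right (by omega)) _
        _ = i*m + c*((m-1)+1) := by rw [Nat.mul_succ]
        _ ≤ i*m + c*m := Nat.add_le_add_left hmul _
        _ = (i+c)*m := by rw [Nat.add_mul]
    rw [hAexp2, map_add, homogeneousComponent_eq_zero _ _ hdegT3, zero_add]
    rw [homogeneousComponent_of_mem ((mem_homogeneousSubmodule _ _).2
      ((homogeneousComponent_isHomogeneous m q).pow n))]
    rw [if_pos (mul_comm n m)]
  have hhcnm : homogeneousComponent (n*m) P = an • qm^n := by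
    rw [hPtop _ (le_of_lt hs0lt), hqm_top _ (le_of_lt hs0lt), hhcX _ hs0lt, add_zero, hAntop]
  have hdegP : P.totalDegree = n*m := by
    refine le_antisymm ?_ ?_
    · rw [hPsum]
      refine le_trans (totalDegree_finset_sum _ _) (Finset.sup_le fun k hk => ?_)
      refine le_trans (totalDegree_smul_le _ _) (le_trans (hdegqk k) ?_)
      exact Nat.mul_le_mul_right m (Nat.lt_succ_iff.1 (Finset.mem_range.1 hk))
    · by_contra hlt
      push_neg at hlt
      have h0 := homogeneousComponent_eq_zero (n*m) P hlt
      rw [hhcnm] at h0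
      exact (smul_ne_zero han0 (pow_ne_zero n hqm0)) h0
  -- the supremum for P
  have hSPbdd : BddAbove {k : ℕ | ∃ d, MvPolynomial.coeff d (homogeneousComponent k P) ∉ F} := by
    refine ⟨s0, fun s hs => ?_⟩
    by_contra h
    push_neg at h
    obtain ⟨d, hd⟩ := hs
    exact hd (hSPhigh s h d)
  have hSPsup : sSup {k : ℕ | ∃ d, MvPolynomial.coeff d (homogeneousComponent k P) ∉ F} = s0 := by
    refine le_antisymm (csSup_le ⟨s0, ⟨dbad, hnot⟩⟩ fun s hs => ?_) (le_csSup hSPbdd ⟨dbad, hnot⟩)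
    by_contra h
    push_neg at h
    obtain ⟨d, hd⟩ := hs
    exact hd (hSPhigh s h d)
  refine ⟨hfirst, ?_⟩
  simp only [deficit2]
  rw [← hm, ← hSq, ← ht]
  rw [hSPsup]
  rw [show P.totalDegree = n*m from hdegP]
  rw [hs0, hmm]
  omega
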